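/- Let A be a unital C*-algebra with a closed two-sided ideal I, and let Γ be a countable group acting on A by *-automorphisms preserving I. For any countable set I₀ ⊆ I there exists an increasing sequence (α_n) in I with 0 ≤ α_n ≤ 1 such that ‖(1 − α_n)a‖ → 0 for all a ∈ I₀ and ‖α_n − g·α_n‖ → 0 for all g ∈ Γ. -/

import Mathlib

open Filter Topology

open Filter Topology CStarAlgebra

section QAhelpers
variable {A : Type*} [CStarAlgebra A] [PartialOrder A] [StarOrderedRing A]

lemma qa_smul_nonneg {r : ℝ} (hr : 0 ≤ r) {x : A} (hx : 0 ≤ x) : 0 ≤ r • x := by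
  have h1 : (Real.sqrt r • CFC.sqrt x) * (Real.sqrt r • CFC.sqrt x) = r • x := by
    rw [smul_mul_smul_comm, Real.mul_self_sqrt hr, CFC.sqrt_mul_sqrt_self x hx]
  have h2 : star (Real.sqrt r • CFC.sqrt x) = Real.sqrt r • CFC.sqrt x := by
    rw [star_smul, star_trivial, (IsSelfAdjoint.of_nonneg (CFC.sqrt_nonneg _)).star_eq]
  calc (0:A) ≤ star (Real.sqrt r • CFC.sqrt x) * (Real.sqrt r • CFC.sqrt x) :=
        star_mul_self_nonneg _
    _ = r • x := by rw [h2, h1]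

lemma qa_sqrt_eq_cfc {x : A} (hx : 0 ≤ x) : CFC.sqrt x = cfc Real.sqrt x := by
  have h1 : cfc Real.sqrt x * cfc Real.sqrt x = x := by
    rw [← cfc_mul ..]
    calc cfc (fun t => Real.sqrt t * Real.sqrt t) x = cfc (fun t : ℝ => t) x :=
          cfc_congr fun t ht => Real.mul_self_sqrt (spectrum_nonneg_of_nonneg hx ht)
      _ = x := cfc_id' ℝ x
  exact CFC.sqrt_unique h1 (cfc_nonneg fun t _ => Real.sqrt_nonneg t)

/-- operator monotonicity of sqrt, invertible case -/
lemma qa_sqrt_le_sqrt_unit {a : A} {b : Aˣ} (ha : 0 ≤ a) (hb : 0 ≤ (b:A))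
    (hab : a ≤ (b:A)) : CFC.sqrt a ≤ CFC.sqrt (b:A) := by
  rcases subsingleton_or_nontrivial A with hsub | hnt
  · exact le_of_eq (Subsingleton.elim _ _)
  set y := CFC.sqrt (b:A) with hy_def
  have hy : 0 ≤ y := (CFC.sqrt_nonneg _)
  have hyy : y * y = (b:A) := CFC.sqrt_mul_sqrt_self _ hb
  have hcom : Commute y (b:A) := hyy ▸ (Commute.refl y).mul_right (Commute.refl y)
  have hcom' : Commute y ((↑b⁻¹:A)) := hcom.units_inv_right
  set yu : Aˣ := ⟨y, y * (↑b⁻¹:A),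
    by rw [← mul_assoc, hyy]; exact b.mul_inv,
    by rw [mul_assoc, ← hcom'.eq, ← mul_assoc, hyy]; exact b.mul_inv⟩ with hyu_def
  have hyu_coe : (yu : A) = y := rfl
  have hyusq : yu * yu = b := Units.ext (by rw [Units.val_mul, hyu_coe, hyy])
  have hinv : CFC.sqrt ((↑b⁻¹:A)) = (↑yu⁻¹:A) := by
    refine CFC.sqrt_unique ?_ (CFC.inv_nonneg_of_nonneg yu (hyu_coe ▸ hy))
    calc (↑yu⁻¹:A) * (↑yu⁻¹:A) = ↑(yu⁻¹ * yu⁻¹) := (Units.val_mul _ _).symm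
      _ = ↑(yu * yu)⁻¹ := by rw [mul_inv_rev]
      _ = (↑b⁻¹:A) := by rw [hyusq]
  have hz : ‖CFC.sqrt a * CFC.sqrt ((↑b⁻¹:A))‖ ≤ 1 :=
    (le_iff_norm_sqrt_mul_sqrt_inv ha hb).mp hab
  rw [← hyu_coe]
  refine (le_iff_norm_sqrt_mul_sqrt_inv (CFC.sqrt_nonneg _) (hyu_coe ▸ hy)).mpr ?_
  set s := CFC.sqrt (CFC.sqrt a)
  set t := CFC.sqrt ((↑yu⁻¹:A))
  have hs : 0 ≤ s := (CFC.sqrt_nonneg _)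
  have ht : 0 ≤ t := (CFC.sqrt_nonneg _)
  have hss : s * s = CFC.sqrt a := CFC.sqrt_mul_sqrt_self _ (CFC.sqrt_nonneg _)
  have htt : t * t = (↑yu⁻¹:A) := CFC.sqrt_mul_sqrt_self _
    (CFC.inv_nonneg_of_nonneg yu (hyu_coe ▸ hy))
  rw [← sq_le_one_iff₀ (norm_nonneg _), sq, ← CStarRing.norm_star_mul_self]
  have hstar : star (s * t) = t * s := by
    rw [star_mul, (IsSelfAdjoint.of_nonneg hs).star_eq, (IsSelfAdjoint.of_nonneg ht).star_eq]
  rw [hstar]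
  have hq : t * s * (s * t) = t * CFC.sqrt a * t := by
    rw [mul_assoc, ← mul_assoc s s t, hss, ← mul_assoc]
  rw [hq]
  have hqpos : 0 ≤ t * CFC.sqrt a * t := by
    have := star_left_conjugate_nonneg (a := CFC.sqrt a) (CFC.sqrt_nonneg _) t
    rwa [(IsSelfAdjoint.of_nonneg ht).star_eq] at this
  rw [CStarAlgebra.norm_le_one_iff_of_nonneg _ hqpos, ← map_one (algebraMap ℝ A),
    le_algebraMap_iff_spectrum_le]
  intro x hx
  rcases eq_or_ne x 0 with rfl | hx0
  · exact zero_le_one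
  · have hx' : x ∈ spectrum ℝ ((CFC.sqrt a * t) * t) := by
      have hmem : x ∈ spectrum ℝ (t * (CFC.sqrt a * t)) \ {0} := by
        rw [← mul_assoc]
        exact ⟨hx, hx0⟩
      rw [spectrum.nonzero_mul_comm] at hmem
      exact hmem.1
    rw [mul_assoc, htt] at hx'
    have hxle : ‖x‖ ≤ ‖CFC.sqrt a * (↑yu⁻¹:A)‖ := spectrum.norm_le_norm_of_mem hx'
    rw [← hinv] at hxle
    calc x ≤ ‖x‖ := Real.le_norm_self x
      _ ≤ 1 := hxle.trans hz

/-- Löwner–Heinz for the square root -/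
lemma qa_sqrt_le_sqrt {a b : A} (ha : 0 ≤ a) (hab : a ≤ b) : CFC.sqrt a ≤ CFC.sqrt b := by
  have hb : 0 ≤ b := ha.trans hab
  have hbsa : IsSelfAdjoint b := .of_nonneg hb
  have key : ∀ ε : ℝ, 0 < ε → CFC.sqrt a ≤ CFC.sqrt b + Real.sqrt ε • 1 := by
    intro ε hε
    have hεA : (0:A) ≤ algebraMap ℝ A ε := by
      rw [Algebra.algebraMap_eq_smul_one]
      exact qa_smul_nonneg hε.le zero_le_one
    have hεu : IsUnit (algebraMap ℝ A ε) := (isUnit_iff_ne_zero.2 hε.ne').map (algebraMap ℝ A)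
    have hbεu : IsUnit (b + algebraMap ℝ A ε) :=
      CStarAlgebra.isUnit_of_le _ (le_add_of_nonneg_left hb) ⟨hεA, hεu⟩
    obtain ⟨bu, hbu⟩ := hbεu
    have hbu_pos : 0 ≤ (bu:A) := by rw [hbu]; exact add_nonneg hb hεA
    have h1 : CFC.sqrt a ≤ CFC.sqrt ((bu:A)) := by
      refine qa_sqrt_le_sqrt_unit ha hbu_pos ?_
      rw [hbu]
      exact hab.trans (le_add_of_nonneg_right hεA)
    have hspec : ∀ x ∈ spectrum ℝ b, 0 ≤ x := fun x hx => spectrum_nonneg_of_nonneg hb hx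
    have h2 : CFC.sqrt ((bu:A)) ≤ CFC.sqrt b + Real.sqrt ε • 1 := by
      have hb_eq : cfc (fun t : ℝ => t + ε) b = (bu:A) := by
        rw [cfc_add .., cfc_id' ℝ b, cfc_const ε b, hbu]
      have hsq_eq : CFC.sqrt ((bu:A)) = cfc (fun t : ℝ => Real.sqrt (t + ε)) b := by
        refine CFC.sqrt_unique ?_ (cfc_nonneg fun t _ => Real.sqrt_nonneg _)
        rw [← cfc_mul .., ← hb_eq]
        refine cfc_congr fun t ht => ?_
        exact Real.mul_self_sqrt (by have := hspec t ht; linarith)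
      have hrhs : cfc (fun t : ℝ => Real.sqrt t + Real.sqrt ε) b
          = cfc Real.sqrt b + Real.sqrt ε • 1 := by
        rw [cfc_add .., cfc_const (Real.sqrt ε) b, Algebra.algebraMap_eq_smul_one]
      rw [hsq_eq, qa_sqrt_eq_cfc hb, ← hrhs]
      refine cfc_mono fun x hx => ?_
      have hx0 : 0 ≤ x := hspec x hx
      rw [← Real.sqrt_sq (by positivity : (0:ℝ) ≤ Real.sqrt x + Real.sqrt ε)]
      apply Real.sqrt_le_sqrt
      rw [add_sq, Real.sq_sqrt hx0, Real.sq_sqrt hε.le]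
      nlinarith [mul_nonneg (Real.sqrt_nonneg x) (Real.sqrt_nonneg ε)]
    exact h1.trans h2
  have hlim : Tendsto (fun n : ℕ => CFC.sqrt b + Real.sqrt (((n:ℝ)+1)⁻¹) • (1:A)) atTop
      (𝓝 (CFC.sqrt b)) := by
    have h0 : Tendsto (fun n : ℕ => ((n:ℝ)+1)⁻¹) atTop (𝓝 0) := by
      simpa [one_div] using (tendsto_one_div_add_atTop_nhds_zero_nat : Tendsto (fun n : ℕ => 1 / ((n:ℝ) + 1)) atTop (𝓝 0))
    have h1 : Tendsto (fun n : ℕ => Real.sqrt (((n:ℝ)+1)⁻¹)) atTop (𝓝 0) := by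
      have h1' := (Real.continuous_sqrt.tendsto 0).comp h0
      rw [Real.sqrt_zero] at h1'
      exact h1'
    have h2 : Tendsto (fun n : ℕ => Real.sqrt (((n:ℝ)+1)⁻¹) • (1:A)) atTop (𝓝 0) := by
      simpa using h1.smul_const (1:A)
    simpa using tendsto_const_nhds.add h2
  refine ge_of_tendsto hlim (Eventually.of_forall fun n => key _ (by positivity))


lemma qa_smul_le {r : ℝ} (hr : 0 ≤ r) {x y : A} (h : x ≤ y) : r • x ≤ r • y := by
  have h1 := qa_smul_nonneg hr (sub_nonneg.2 h)
  rw [smul_sub] at h1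
  exact sub_nonneg.1 h1

lemma qa_smul_le_smul {c c' : ℝ} (h : c ≤ c') {x : A} (hx : 0 ≤ x) : c • x ≤ c' • x := by
  have h1 : 0 ≤ (c' - c) • x := qa_smul_nonneg (by linarith) hx
  rw [sub_smul] at h1
  exact sub_nonneg.1 h1

lemma qa_sqrt_smul {r : ℝ} (hr : 0 ≤ r) {x : A} (hx : 0 ≤ x) :
    CFC.sqrt (r • x) = Real.sqrt r • CFC.sqrt x :=
  CFC.sqrt_unique
    (by rw [smul_mul_smul_comm, Real.mul_self_sqrt hr, CFC.sqrt_mul_sqrt_self x hx])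
    (qa_smul_nonneg (Real.sqrt_nonneg r) (CFC.sqrt_nonneg _))

lemma qa_map_nonneg (ψ : A ≃⋆ₐ[ℂ] A) {x : A} (hx : 0 ≤ x) : 0 ≤ ψ x := by
  have h2 : star (CFC.sqrt x) = CFC.sqrt x := (IsSelfAdjoint.of_nonneg (CFC.sqrt_nonneg _)).star_eq
  calc (0:A) ≤ star (ψ (CFC.sqrt x)) * ψ (CFC.sqrt x) := star_mul_self_nonneg _
    _ = ψ x := by rw [← map_star, h2, ← map_mul, CFC.sqrt_mul_sqrt_self x hx]

lemma qa_map_le (ψ : A ≃⋆ₐ[ℂ] A) {x y : A} (h : x ≤ y) : ψ x ≤ ψ y := by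
  have h1 := qa_map_nonneg ψ (sub_nonneg.2 h)
  rw [map_sub] at h1
  exact sub_nonneg.1 h1

lemma qa_map_sqrt (ψ : A ≃⋆ₐ[ℂ] A) {x : A} (hx : 0 ≤ x) :
    ψ (CFC.sqrt x) = CFC.sqrt (ψ x) := by
  refine (CFC.sqrt_unique ?_ (qa_map_nonneg ψ (CFC.sqrt_nonneg _))).symm
  rw [← map_mul, CFC.sqrt_mul_sqrt_self x hx]

lemma qa_map_norm (ψ : A ≃⋆ₐ[ℂ] A) (x : A) : ‖ψ x‖ = ‖x‖ :=
  NonUnitalStarAlgHom.norm_map ψ ψ.injective x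

lemma qa_map_continuous (ψ : A ≃⋆ₐ[ℂ] A) : Continuous ψ :=
  (NonUnitalStarAlgHom.isometry ψ ψ.injective).continuous

lemma qa_map_rsmul (ψ : A ≃⋆ₐ[ℂ] A) (r : ℝ) (x : A) : ψ (r • x) = r • ψ x := by
  rw [← algebraMap_smul ℂ r x, map_smul, algebraMap_smul]

lemma qa_norm_le_of_sandwich {d : A} {r : ℝ} (hr : 0 ≤ r)
    (h1 : -(r • (1:A)) ≤ d) (h2 : d ≤ r • (1:A)) : ‖d‖ ≤ 3 * r := by
  rcases subsingleton_or_nontrivial A with hsub | hnt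
  · rw [Subsingleton.elim d 0, norm_zero]; positivity
  have hd1 : 0 ≤ d + r • (1:A) := by
    rw [← neg_le_iff_add_nonneg]
    exact h1
  have hd2 : d + r • (1:A) ≤ algebraMap ℝ A (2 * r) := by
    rw [Algebra.algebraMap_eq_smul_one, two_mul, add_smul]
    exact add_le_add_left h2 _
  have hnorm1 : ‖d + r • (1:A)‖ ≤ 2 * r :=
    (CStarAlgebra.norm_le_iff_le_algebraMap _ (by positivity) hd1).mpr hd2
  calc ‖d‖ = ‖(d + r • (1:A)) - r • (1:A)‖ := by rw [add_sub_cancel_right]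
    _ ≤ ‖d + r • (1:A)‖ + ‖r • (1:A)‖ := norm_sub_le _ _
    _ ≤ 2 * r + r := by
        have : ‖r • (1:A)‖ = r := by
          rw [norm_smul, norm_one, Real.norm_of_nonneg hr, mul_one]
        rw [this]
        linarith
    _ ≤ 3 * r := by linarith


lemma qa_spectrum_nonneg {x : A} (hx : 0 ≤ x) : ∀ t ∈ spectrum ℝ x, 0 ≤ t :=
  fun t ht => spectrum_nonneg_of_nonneg hx ht

lemma qa_spectrum_le_one {x : A} (hx : 0 ≤ x) (hx1 : x ≤ 1) : ∀ t ∈ spectrum ℝ x, t ≤ 1 := by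
  have h := (le_algebraMap_iff_spectrum_le (r := (1:ℝ)) (a := x)
    (IsSelfAdjoint.of_nonneg hx)).mp (by rwa [map_one])
  exact h

lemma qa_le_sqrt_self {x : A} (hx : 0 ≤ x) (hx1 : x ≤ 1) : x ≤ CFC.sqrt x := by
  rw [qa_sqrt_eq_cfc hx]
  nth_rw 1 [← cfc_id' ℝ x]
  refine cfc_mono fun t ht => ?_
  have h0 := qa_spectrum_nonneg hx t ht
  have h1 := qa_spectrum_le_one hx hx1 t ht
  rw [Real.le_sqrt h0 h0]
  nlinarith

lemma qa_sqrt_le_one {x : A} (hx : 0 ≤ x) (hx1 : x ≤ 1) : CFC.sqrt x ≤ 1 := by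
  rw [qa_sqrt_eq_cfc hx]
  calc cfc Real.sqrt x ≤ cfc (fun _ : ℝ => (1:ℝ)) x := by
        refine cfc_mono fun t ht => ?_
        exact Real.sqrt_le_one.mpr (qa_spectrum_le_one hx hx1 t ht)
    _ = 1 := cfc_const_one ℝ x

lemma qa_mem_smul {I : TwoSidedIdeal A} {r : ℝ} {x : A} (hx : x ∈ I) : r • x ∈ I := by
  rw [Algebra.smul_def]
  exact I.mul_mem_left _ _ hx

lemma qa_mem_tsum {I : TwoSidedIdeal A} (hIc : IsClosed (I : Set A)) {f : ℕ → A}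
    (hf : Summable f) (h : ∀ i, f i ∈ I) : (∑' i, f i) ∈ I := by
  refine hIc.mem_of_tendsto hf.hasSum (Eventually.of_forall fun s => ?_)
  exact Finset.sum_induction f (· ∈ I) (fun _ _ ha hb => I.add_mem ha hb) I.zero_mem (fun i _ => h i)

/-- pointwise estimate : for `t ≥ 0`, `ε > 0` : `|√t - t/√(t+ε)| ≤ √ε`. -/
lemma qa_sqrt_pointwise {t ε : ℝ} (ht : 0 ≤ t) (hε : 0 < ε) :
    |Real.sqrt t - t * (Real.sqrt (t + ε))⁻¹| ≤ Real.sqrt ε := by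
  have hs : 0 < Real.sqrt (t + ε) := Real.sqrt_pos.2 (by positivity)
  have hts : Real.sqrt t ≤ Real.sqrt (t + ε) := Real.sqrt_le_sqrt (by linarith)
  have hsq : Real.sqrt (t + ε) * Real.sqrt (t + ε) = t + ε := Real.mul_self_sqrt (by positivity)
  have htt : Real.sqrt t * Real.sqrt t = t := Real.mul_self_sqrt ht
  have hεs : Real.sqrt ε ≤ Real.sqrt (t + ε) := Real.sqrt_le_sqrt (by linarith)
  have hεsq : Real.sqrt ε * Real.sqrt ε = ε := Real.mul_self_sqrt hε.le
  have hεpos : 0 < Real.sqrt ε := Real.sqrt_pos.2 hε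
  rw [abs_le]
  constructor
  · have h1 : t * (Real.sqrt (t + ε))⁻¹ ≤ Real.sqrt t := by
      rw [mul_inv_le_iff₀ hs]
      calc t = Real.sqrt t * Real.sqrt t := htt.symm
        _ ≤ Real.sqrt t * Real.sqrt (t + ε) := by
            exact mul_le_mul_of_nonneg_left hts (Real.sqrt_nonneg t)
    nlinarith [Real.sqrt_nonneg t]
  · have h2 : Real.sqrt t - t * (Real.sqrt (t + ε))⁻¹
        ≤ Real.sqrt (t + ε) - t * (Real.sqrt (t + ε))⁻¹ := by linarith
    have h3 : Real.sqrt (t + ε) - t * (Real.sqrt (t + ε))⁻¹ = ε * (Real.sqrt (t + ε))⁻¹ := by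
      field_simp
      rw [Real.sq_sqrt (by positivity)]
      ring
    have h4 : ε * (Real.sqrt (t + ε))⁻¹ ≤ ε * (Real.sqrt ε)⁻¹ := by
      refine mul_le_mul_of_nonneg_left ?_ hε.le
      exact inv_anti₀ hεpos hεs
    have h5 : ε * (Real.sqrt ε)⁻¹ = Real.sqrt ε := by
      field_simp
      rw [Real.sq_sqrt hε.le]
    linarith

lemma qa_sqrt_mem {I : TwoSidedIdeal A} (hIc : IsClosed (I : Set A)) {x : A}
    (hx : x ∈ I) (hx0 : 0 ≤ x) : CFC.sqrt x ∈ I := by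
  have hspec : ∀ t ∈ spectrum ℝ x, (0:ℝ) ≤ t := fun t ht => spectrum_nonneg_of_nonneg hx0 ht
  have key : ∀ ε : ℝ, 0 < ε →
      ‖CFC.sqrt x - x * cfc (fun t : ℝ => (Real.sqrt (t + ε))⁻¹) x‖ ≤ Real.sqrt ε := by
    intro ε hε
    have hg : ContinuousOn (fun t : ℝ => (Real.sqrt (t + ε))⁻¹) (spectrum ℝ x) := by
      refine ContinuousOn.inv₀ ((Real.continuous_sqrt.comp (by fun_prop)).continuousOn) ?_
      intro t ht
      have := hspec t ht
      positivity
    have hx_eq : x * cfc (fun t : ℝ => (Real.sqrt (t + ε))⁻¹) x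
        = cfc (fun t : ℝ => t * (Real.sqrt (t + ε))⁻¹) x := by
      nth_rw 1 [← cfc_id' ℝ x]
      rw [← cfc_mul _ _ x (by fun_prop) hg]
    rw [hx_eq, qa_sqrt_eq_cfc hx0,
      ← cfc_sub _ _ x (Real.continuous_sqrt.continuousOn) (by exact (continuousOn_id.mul hg))]
    refine norm_cfc_le (Real.sqrt_nonneg ε) fun t ht => ?_
    rw [Real.norm_eq_abs]
    exact qa_sqrt_pointwise (hspec t ht) hε
  have hmem : ∀ ε : ℝ, x * cfc (fun t : ℝ => (Real.sqrt (t + ε))⁻¹) x ∈ I :=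
    fun ε => I.mul_mem_right _ _ hx
  have hlim : Tendsto (fun n : ℕ => x * cfc (fun t : ℝ => (Real.sqrt (t + ((n:ℝ)+1)⁻¹))⁻¹) x)
      atTop (𝓝 (CFC.sqrt x)) := by
    rw [← tendsto_sub_nhds_zero_iff]
    have hb : Tendsto (fun n : ℕ => Real.sqrt (((n:ℝ)+1)⁻¹)) atTop (𝓝 0) := by
      have h0 : Tendsto (fun n : ℕ => ((n:ℝ)+1)⁻¹) atTop (𝓝 0) := by
        simpa [one_div] using (tendsto_one_div_add_atTop_nhds_zero_nat : Tendsto (fun n : ℕ => 1 / ((n:ℝ) + 1)) atTop (𝓝 0))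
      have h1' := (Real.continuous_sqrt.tendsto 0).comp h0
      rw [Real.sqrt_zero] at h1'
      exact h1'
    refine squeeze_zero_norm (fun n => ?_) hb
    rw [← norm_neg, neg_sub]
    exact key _ (by positivity)
  exact hIc.mem_of_tendsto hlim (Eventually.of_forall fun n => hmem _)


set_option maxHeartbeats 2000000 in
lemma qa_exists_s {Γ : Type*} [Group Γ]
    (ρ : Γ → (A ≃⋆ₐ[ℂ] A)) (hρ : ∀ g h a, ρ (g * h) a = ρ g (ρ h a))
    (I : TwoSidedIdeal A) (hIclosed : IsClosed (I : Set A))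
    (hIinv : ∀ (g : Γ), ∀ a ∈ I, ρ g a ∈ I)
    (v : ℕ → Γ) (hv : Function.Surjective v)
    (u : ℕ → A) (huI : ∀ m, u m ∈ I) :
    ∃ s : A, s ∈ I ∧ 0 ≤ s ∧ s ≤ 1 ∧
      (∀ g : Γ, ∃ C : ℝ, 1 ≤ C ∧ ρ g s ≤ C • s ∧ s ≤ C • ρ g s) ∧
      (∀ m, ∃ M : ℝ, 0 < M ∧ u m * star (u m) ≤ M • s) := by
  classical
  have hρ_one : ∀ x : A, ρ 1 x = x := by
    intro x
    have h1 := hρ 1 1 x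
    rw [one_mul] at h1
    exact ((ρ 1).injective h1).symm
  set b : ℕ → A := fun m => u m * star (u m) with hb_def
  have hbI : ∀ m, b m ∈ I := fun m => I.mul_mem_right _ _ (huI m)
  have hb0 : ∀ m, 0 ≤ b m := fun m => mul_star_self_nonneg (u m)
  set w : ℕ → ℝ := fun m => (2⁻¹:ℝ)^m * (1 + ‖b m‖)⁻¹ with hw_def
  have hbnorm_pos : ∀ m, (0:ℝ) < 1 + ‖b m‖ := fun m => by positivity
  have hw_pos : ∀ m, 0 < w m := fun m => by
    have := hbnorm_pos m
    simp only [hw_def]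
    positivity
  have hgeo : Summable (fun m : ℕ => ((2:ℝ)⁻¹)^m) := by
    apply summable_geometric_of_lt_one <;> norm_num
  have hgeo_sum : ∑' m : ℕ, ((2:ℝ)⁻¹)^m = 2 := by
    simpa using tsum_geometric_two
  -- bound for the first sum
  have hwb_bound : ∀ m, ‖w m • b m‖ ≤ ((2:ℝ)⁻¹)^m := by
    intro m
    rw [norm_smul, Real.norm_of_nonneg (hw_pos m).le]
    simp only [hw_def]
    rw [mul_assoc]
    calc ((2:ℝ)⁻¹)^m * ((1 + ‖b m‖)⁻¹ * ‖b m‖) ≤ ((2:ℝ)⁻¹)^m * 1 := by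
          refine mul_le_mul_of_nonneg_left ?_ (by positivity)
          rw [inv_mul_le_iff₀ (hbnorm_pos m)]
          linarith
      _ = ((2:ℝ)⁻¹)^m := mul_one _
  have hsum0 : Summable (fun m => w m • b m) :=
    Summable.of_norm_bounded hgeo hwb_bound
  -- iterated construction
  set G : A → A := fun x => ∑' n : ℕ, ((2:ℝ)⁻¹)^(n+1) • (ρ (v n)) x with hG_def
  have hsummableG : ∀ x : A, Summable (fun n : ℕ => ((2:ℝ)⁻¹)^(n+1) • (ρ (v n)) x) := by
    intro x
    refine Summable.of_norm_bounded (hgeo.mul_right ‖x‖) fun n => ?_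
    rw [norm_smul, Real.norm_of_nonneg (by positivity), qa_map_norm]
    calc ((2:ℝ)⁻¹)^(n+1) * ‖x‖ ≤ ((2:ℝ)⁻¹)^n * ‖x‖ := by
          refine mul_le_mul_of_nonneg_right ?_ (norm_nonneg x)
          refine pow_le_pow_of_le_one (by norm_num) (by norm_num) (by omega)
      _ = _ := rfl
  set H : ℕ → A := fun j => Nat.rec (∑' m, w m • b m) (fun _ Hj => G Hj) j with hH_def
  have hH_zero : H 0 = ∑' m, w m • b m := rfl
  have hH_succ : ∀ j, H (j+1) = G (H j) := fun j => rfl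
  -- facts about H by induction
  have hH_facts : ∀ j, H j ∈ I ∧ 0 ≤ H j ∧ ‖H j‖ ≤ 2 := by
    intro j
    induction j with
    | zero =>
      refine ⟨qa_mem_tsum hIclosed hsum0 fun m => qa_mem_smul (hbI m), ?_, ?_⟩
      · exact tsum_nonneg fun m => qa_smul_nonneg (hw_pos m).le (hb0 m)
      · calc ‖H 0‖ ≤ ∑' m, ((2:ℝ)⁻¹)^m :=
              (norm_tsum_le_tsum_norm (hgeo.of_nonneg_of_le (fun m => norm_nonneg _)
                hwb_bound)).trans (Summable.tsum_le_tsum hwb_bound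
                  (hgeo.of_nonneg_of_le (fun m => norm_nonneg _) hwb_bound) hgeo)
          _ = 2 := hgeo_sum
    | succ j ih =>
      obtain ⟨ihI, ih0, ihn⟩ := ih
      rw [hH_succ j]
      refine ⟨qa_mem_tsum hIclosed (hsummableG _) fun n =>
        qa_mem_smul (hIinv _ _ ihI), ?_, ?_⟩
      · exact tsum_nonneg fun n => qa_smul_nonneg (by positivity) (qa_map_nonneg _ ih0)
      · have hb : ∀ n : ℕ, ‖((2:ℝ)⁻¹)^(n+1) • (ρ (v n)) (H j)‖ ≤ ((2:ℝ)⁻¹)^(n+1) * 2 := by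
          intro n
          rw [norm_smul, Real.norm_of_nonneg (by positivity), qa_map_norm]
          exact mul_le_mul_of_nonneg_left ihn (by positivity)
        calc ‖G (H j)‖ ≤ ∑' n : ℕ, ((2:ℝ)⁻¹)^(n+1) * 2 := by
              refine (norm_tsum_le_tsum_norm ?_).trans (Summable.tsum_le_tsum hb ?_ ?_)
              · exact Summable.of_nonneg_of_le (fun n => norm_nonneg _) hb
                  (by simpa [mul_comm] using (hgeo.mul_left (2⁻¹ * 2)).congr fun n => by rw [pow_succ, mul_inv, inv_pow]; ring)
              · exact Summable.of_nonneg_of_le (fun n => norm_nonneg _) hb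
                  (by simpa [mul_comm] using (hgeo.mul_left (2⁻¹ * 2)).congr fun n => by rw [pow_succ, mul_inv, inv_pow]; ring)
              · exact (by simpa [mul_comm] using (hgeo.mul_left (2⁻¹ * 2)).congr fun n => by rw [pow_succ, mul_inv, inv_pow]; ring)
          _ = (∑' n : ℕ, ((2:ℝ)⁻¹)^(n+1)) * 2 := tsum_mul_right
          _ ≤ 2 := by
              have h1 : ∑' n : ℕ, ((2:ℝ)⁻¹)^(n+1) = 2⁻¹ * ∑' n : ℕ, ((2:ℝ)⁻¹)^n := by
                rw [← tsum_mul_left]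
                exact tsum_congr fun n => by ring
              rw [h1, hgeo_sum]
              norm_num
  -- the element h
  have hHnorm : ∀ j : ℕ, ‖((2:ℝ)⁻¹)^j • H j‖ ≤ ((2:ℝ)⁻¹)^j * 2 := fun j => by
    rw [norm_smul, Real.norm_of_nonneg (by positivity)]
    exact mul_le_mul_of_nonneg_left (hH_facts j).2.2 (by positivity)
  have hsummable_h : Summable (fun j : ℕ => ((2:ℝ)⁻¹)^j • H j) :=
    Summable.of_norm_bounded (hgeo.mul_right 2) hHnorm
  set h : A := ∑' j : ℕ, ((2:ℝ)⁻¹)^j • H j with hh_def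
  have hhI : h ∈ I := qa_mem_tsum hIclosed hsummable_h fun j => qa_mem_smul (hH_facts j).1
  have hterm_nonneg : ∀ j : ℕ, 0 ≤ ((2:ℝ)⁻¹)^j • H j := fun j =>
    qa_smul_nonneg (by positivity) (hH_facts j).2.1
  have hh0 : 0 ≤ h := tsum_nonneg hterm_nonneg
  have hzero_add := Summable.tsum_eq_zero_add hsummable_h
  have htail : (∑' j : ℕ, ((2:ℝ)⁻¹)^(j+1) • H (j+1)) ≤ h := by
    rw [hh_def, hzero_add]
    exact le_add_of_nonneg_left (hterm_nonneg 0)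
  have hH0_le : H 0 ≤ h := by
    rw [hh_def, hzero_add]
    have h0' : ((2:ℝ)⁻¹)^0 • H 0 = H 0 := by norm_num
    rw [h0']
    exact le_add_of_nonneg_right (tsum_nonneg fun j => hterm_nonneg (j+1))
  have hsummable_shift : Summable (fun j : ℕ => ((2:ℝ)⁻¹)^(j+1) • H (j+1)) :=
    (summable_nat_add_iff 1).2 hsummable_h
  have hsummable_map : ∀ n₀ : ℕ, Summable (fun j : ℕ => ((2:ℝ)⁻¹)^j • (ρ (v n₀)) (H j)) := by
    intro n₀
    refine Summable.of_norm_bounded (hgeo.mul_right 2) fun j => ?_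
    rw [norm_smul, Real.norm_of_nonneg (by positivity), qa_map_norm]
    exact mul_le_mul_of_nonneg_left (hH_facts j).2.2 (by positivity)
  have hKey1 : ∀ n₀ : ℕ, ρ (v n₀) h ≤ ((2:ℝ)^(n₀+2)) • h := by
    intro n₀
    have hmap : ρ (v n₀) h = ∑' j : ℕ, ((2:ℝ)⁻¹)^j • (ρ (v n₀)) (H j) := by
      rw [hh_def]
      rw [← (hsummable_h.hasSum.map (ρ (v n₀)) (qa_map_continuous _)).tsum_eq]
      exact tsum_congr fun j => by
        simp only [Function.comp_apply]
        rw [qa_map_rsmul]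
    have hterm : ∀ j : ℕ, ((2:ℝ)⁻¹)^j • (ρ (v n₀)) (H j)
        ≤ ((2:ℝ)^(n₀+2)) • (((2:ℝ)⁻¹)^(j+1) • H (j+1)) := by
      intro j
      have h1 : ((2:ℝ)⁻¹)^(n₀+1) • (ρ (v n₀)) (H j) ≤ H (j+1) := by
        rw [hH_succ j]
        exact Summable.le_tsum (hsummableG (H j)) n₀ fun n _ =>
          qa_smul_nonneg (by positivity) (qa_map_nonneg _ (hH_facts j).2.1)
      have h2 := qa_smul_le (r := (2:ℝ)^(n₀+1)) (by positivity) h1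
      rw [smul_smul] at h2
      have hc : ((2:ℝ)^(n₀+1)) * ((2:ℝ)⁻¹)^(n₀+1) = 1 := by
        rw [← mul_pow]
        norm_num
      rw [hc, one_smul] at h2
      have h3 := qa_smul_le (r := ((2:ℝ)⁻¹)^j) (by positivity) h2
      refine h3.trans_eq ?_
      rw [smul_smul, smul_smul]
      congr 1
      ring
    have hsum_le := Summable.tsum_le_tsum hterm (hsummable_map n₀) (hsummable_shift.const_smul _)
    rw [← hmap] at hsum_le
    refine hsum_le.trans ?_
    rw [((hsummable_shift.hasSum.const_smul ((2:ℝ)^(n₀+2))).tsum_eq : _)]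
    exact qa_smul_le (by positivity) htail
  -- norm of h
  have hhnorm : ‖h‖ ≤ 4 := by
    have hsn : Summable (fun j : ℕ => ‖((2:ℝ)⁻¹)^j • H j‖) :=
      Summable.of_nonneg_of_le (fun j => norm_nonneg _) hHnorm (hgeo.mul_right 2)
    calc ‖h‖ ≤ ∑' j : ℕ, ‖((2:ℝ)⁻¹)^j • H j‖ := norm_tsum_le_tsum_norm hsn
      _ ≤ ∑' j : ℕ, ((2:ℝ)⁻¹)^j * 2 := Summable.tsum_le_tsum hHnorm hsn (hgeo.mul_right 2)
      _ = (∑' j : ℕ, ((2:ℝ)⁻¹)^j) * 2 := tsum_mul_right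
      _ = 4 := by rw [hgeo_sum]; norm_num
  set s : A := (4:ℝ)⁻¹ • h with hs_def
  have hsI : s ∈ I := qa_mem_smul hhI
  have hs0 : 0 ≤ s := qa_smul_nonneg (by norm_num) hh0
  have hsnorm : ‖s‖ ≤ 1 := by
    rw [hs_def, norm_smul, Real.norm_of_nonneg (by norm_num)]
    calc (4:ℝ)⁻¹ * ‖h‖ ≤ (4:ℝ)⁻¹ * 4 := by
          exact mul_le_mul_of_nonneg_left hhnorm (by norm_num)
      _ = 1 := by norm_num
  have hs1 : s ≤ 1 := (CStarAlgebra.norm_le_one_iff_of_nonneg s hs0).mp hsnorm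
  have hKey1s : ∀ n₀ : ℕ, ρ (v n₀) s ≤ ((2:ℝ)^(n₀+2)) • s := by
    intro n₀
    rw [hs_def, qa_map_rsmul]
    have h2 := qa_smul_le (r := (4:ℝ)⁻¹) (by norm_num) (hKey1 n₀)
    rw [smul_smul, mul_comm, ← smul_smul] at h2
    exact h2
  refine ⟨s, hsI, hs0, hs1, ?_, ?_⟩
  · intro g
    obtain ⟨n₀, hn₀⟩ := hv g
    obtain ⟨n₁, hn₁⟩ := hv g⁻¹
    have hone : ∀ k : ℕ, (1:ℝ) ≤ 2^k := fun k => one_le_pow₀ (by norm_num)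
    refine ⟨max ((2:ℝ)^(n₀+2)) ((2:ℝ)^(n₁+2)), le_trans (hone _) (le_max_left _ _), ?_, ?_⟩
    · rw [← hn₀]
      exact (hKey1s n₀).trans (qa_smul_le_smul (le_max_left _ _) hs0)
    · have h1 : ρ g⁻¹ s ≤ (2:ℝ)^(n₁+2) • s := by rw [← hn₁]; exact hKey1s n₁
      have h2 := qa_map_le (ρ g) h1
      rw [← hρ g g⁻¹ s, mul_inv_cancel, hρ_one,
        qa_map_rsmul (ρ g) ((2:ℝ)^(n₁+2)) s] at h2
      exact h2.trans (qa_smul_le_smul (le_max_right _ _) (qa_map_nonneg _ hs0))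
  · intro m
    refine ⟨(w m)⁻¹ * 4, by positivity, ?_⟩
    have h1 : w m • b m ≤ H 0 := by
      rw [hH_zero]
      exact Summable.le_tsum hsum0 m fun j _ => qa_smul_nonneg (hw_pos j).le (hb0 j)
    have h3 := qa_smul_le (r := (w m)⁻¹) (by positivity) (h1.trans hH0_le)
    rw [smul_smul, inv_mul_cancel₀ (hw_pos m).ne', one_smul] at h3
    have h4 : h = (4:ℝ) • s := by
      rw [hs_def, smul_smul]
      norm_num
    rw [h4, smul_smul] at h3
    exact h3


set_option maxHeartbeats 2000000 in
lemma qa_alpha {Γ : Type*} [Group Γ]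
    (ρ : Γ → (A ≃⋆ₐ[ℂ] A))
    (I : TwoSidedIdeal A) (hIclosed : IsClosed (I : Set A))
    (u : ℕ → A)
    (s : A) (hsI : s ∈ I) (hs0 : 0 ≤ s) (hs1 : s ≤ 1)
    (hinv : ∀ g : Γ, ∃ C : ℝ, 1 ≤ C ∧ ρ g s ≤ C • s ∧ s ≤ C • ρ g s)
    (hdom : ∀ m, ∃ M : ℝ, 0 < M ∧ u m * star (u m) ≤ M • s) :
    ∃ α : ℕ → A, Monotone α ∧ (∀ n, α n ∈ I) ∧ (∀ n, 0 ≤ α n) ∧ (∀ n, α n ≤ 1) ∧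
      (∀ m, Tendsto (fun n => ‖(1 - α n) * u m‖) atTop (𝓝 0)) ∧
      (∀ g : Γ, Tendsto (fun n => ‖α n - ρ g (α n)‖) atTop (𝓝 0)) := by
  classical
  set α : ℕ → A := fun n => Nat.rec s (fun _ x => CFC.sqrt x) n with hα_def
  have hα_zero : α 0 = s := rfl
  have hα_succ : ∀ n, α (n+1) = CFC.sqrt (α n) := fun n => rfl
  have hα0 : ∀ n, 0 ≤ α n := by
    intro n
    induction n with
    | zero => exact hs0
    | succ n ih => exact (CFC.sqrt_nonneg _)
  have hαI : ∀ n, α n ∈ I := by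
    intro n
    induction n with
    | zero => exact hsI
    | succ n ih => exact qa_sqrt_mem hIclosed ih (hα0 n)
  have hα1 : ∀ n, α n ≤ 1 := by
    intro n
    induction n with
    | zero => exact hs1
    | succ n ih => exact qa_sqrt_le_one (hα0 n) ih
  have hmono : Monotone α :=
    monotone_nat_of_le_succ fun n => qa_le_sqrt_self (hα0 n) (hα1 n)
  -- the scalar functions
  set phi : ℕ → ℝ → ℝ := fun n => Nat.rec (fun t => t) (fun _ f t => Real.sqrt (f t)) n
    with hphi_def
  have hphi_zero : phi 0 = fun t => t := rfl
  have hphi_succ : ∀ n, phi (n+1) = fun t => Real.sqrt (phi n t) := fun n => rfl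
  have hphi_cont : ∀ n, Continuous (phi n) := by
    intro n
    induction n with
    | zero => exact continuous_id
    | succ n ih => exact Real.continuous_sqrt.comp ih
  have hphi_nonneg : ∀ n t, 0 ≤ t → 0 ≤ phi n t := by
    intro n
    induction n with
    | zero => exact fun t ht => ht
    | succ n ih => exact fun t _ => Real.sqrt_nonneg _
  have hphi_le_one : ∀ n t, 0 ≤ t → t ≤ 1 → phi n t ≤ 1 := by
    intro n
    induction n with
    | zero => exact fun t _ ht => ht
    | succ n ih => exact fun t h0 h1 => Real.sqrt_le_one.mpr (ih t h0 h1)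
  have hphi_mono : ∀ n {t₁ t₂ : ℝ}, t₁ ≤ t₂ → phi n t₁ ≤ phi n t₂ := by
    intro n
    induction n with
    | zero => exact fun h => h
    | succ n ih => exact fun h => Real.sqrt_le_sqrt (ih h)
  have hphi_rpow : ∀ n {δ : ℝ}, 0 ≤ δ → phi n δ = δ ^ ((2⁻¹:ℝ)^n) := by
    intro n
    induction n with
    | zero => intro δ _; rw [hphi_zero]; simp
    | succ n ih =>
      intro δ hδ
      rw [hphi_succ]
      show Real.sqrt (phi n δ) = _
      rw [ih hδ, Real.sqrt_eq_rpow, ← Real.rpow_mul hδ, pow_succ]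
      norm_num
  have hphi_tendsto : ∀ {δ : ℝ}, 0 < δ → Tendsto (fun n => phi n δ) atTop (𝓝 1) := by
    intro δ hδ
    have h1 : Tendsto (fun n : ℕ => Real.log δ * (2⁻¹:ℝ)^n) atTop (𝓝 0) := by
      simpa using (tendsto_pow_atTop_nhds_zero_of_lt_one (by norm_num)
        (by norm_num : (2⁻¹:ℝ) < 1)).const_mul (Real.log δ)
    have h2 := (Real.continuous_exp.tendsto 0).comp h1
    rw [Real.exp_zero] at h2
    refine h2.congr fun n => ?_
    rw [hphi_rpow n hδ.le, Real.rpow_def_of_pos hδ]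
    rfl
  have hαcfc : ∀ n, α n = cfc (phi n) s := by
    intro n
    induction n with
    | zero => rw [hα_zero, hphi_zero, cfc_id' ℝ s]
    | succ n ih =>
      rw [hα_succ, ih, qa_sqrt_eq_cfc (ih ▸ hα0 n), hphi_succ]
      exact (cfc_comp Real.sqrt (phi n) s (IsSelfAdjoint.of_nonneg hs0)
        (hg := Real.continuous_sqrt.continuousOn)
        (hf := (hphi_cont n).continuousOn)).symm
  have hσ0 : ∀ t ∈ spectrum ℝ s, 0 ≤ t := qa_spectrum_nonneg hs0
  have hσ1 : ∀ t ∈ spectrum ℝ s, t ≤ 1 := qa_spectrum_le_one hs0 hs1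
  refine ⟨α, hmono, hαI, hα0, hα1, ?_, ?_⟩
  · -- approximate unit part
    intro m
    obtain ⟨M, hM, hdm⟩ := hdom m
    rw [Metric.tendsto_atTop]
    intro ε hε
    set M' : ℝ := M + 1 with hM'_def
    have hM' : 0 < M' := by positivity
    set δ : ℝ := min (ε^2 / (4 * M')) 1 with hδ_def
    have hδpos : 0 < δ := by
      refine lt_min (by positivity) one_pos
    have hδ1 : δ ≤ 1 := min_le_right _ _
    have hδ2 : δ ≤ ε^2/(4*M') := min_le_left _ _
    obtain ⟨N, hN⟩ := (Metric.tendsto_atTop.mp (hphi_tendsto hδpos)) (ε^2/(4*M'))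
      (by positivity)
    refine ⟨N, fun n hn => ?_⟩
    have hph : 1 - phi n δ < ε^2/(4*M') := by
      have := hN n hn
      rw [Real.dist_eq, abs_lt] at this
      linarith [this.1]
    have hph0 : phi n δ ≤ 1 := hphi_le_one n δ hδpos.le hδ1
    -- norm bound on the cfc element
    have hcfc_bound : ‖(1 - α n) * s * (1 - α n)‖ ≤ δ + ε^2/(4*M') := by
      have h1sub : (1:A) - α n = cfc (fun t => 1 - phi n t) s := by
        rw [hαcfc n, ← cfc_const_one ℝ s, ← cfc_sub _ _ s (by fun_prop)
          ((hphi_cont n).continuousOn)]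
      have hprod : (1 - α n) * s * (1 - α n)
          = cfc (fun t => (1 - phi n t) * t * (1 - phi n t)) s := by
        rw [h1sub]
        nth_rw 2 [← cfc_id' ℝ s]
        rw [← cfc_mul (fun t => 1 - phi n t) (fun t : ℝ => t) s
            ((continuous_const.sub (hphi_cont n)).continuousOn)
            (continuousOn_id),
          ← cfc_mul (fun t => (1 - phi n t) * t) (fun t => 1 - phi n t) s
            (((continuous_const.sub (hphi_cont n)).mul continuous_id).continuousOn)
            ((continuous_const.sub (hphi_cont n)).continuousOn)]
      rw [hprod]
      refine norm_cfc_le (by positivity) fun t ht => ?_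
      have ht0 := hσ0 t ht
      have ht1 := hσ1 t ht
      have hp0 : 0 ≤ phi n t := hphi_nonneg n t ht0
      have hp1 : phi n t ≤ 1 := hphi_le_one n t ht0 ht1
      have q0 : (0:ℝ) ≤ 1 - phi n t := by linarith
      have q1 : 1 - phi n t ≤ 1 := by linarith
      have qd : (0:ℝ) ≤ ε^2/(4*M') := by positivity
      rw [Real.norm_eq_abs, abs_of_nonneg (mul_nonneg (mul_nonneg q0 ht0) q0)]
      rcases le_or_gt t δ with hcase | hcase
      · have e1 : (1 - phi n t) * t ≤ t := by nlinarith
        have e2 : (1 - phi n t) * t * (1 - phi n t) ≤ (1 - phi n t) * t := by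
          nlinarith [mul_nonneg q0 ht0]
        linarith
      · have hmono' : phi n δ ≤ phi n t := hphi_mono n hcase.le
        have e1 : (1 - phi n t) * t ≤ 1 - phi n t := by nlinarith
        have e2 : (1 - phi n t) * t * (1 - phi n t) ≤ (1 - phi n t) * (1 - phi n t) :=
          mul_le_mul_of_nonneg_right e1 q0
        have e3 : (1 - phi n t) * (1 - phi n t) ≤ 1 - phi n t := by nlinarith
        have e4 : 1 - phi n t ≤ 1 - phi n δ := by linarith
        linarith [hδpos.le]
    -- from the cfc bound to the norm bound
    have hxsq : ‖(1 - α n) * u m‖^2 ≤ M * ‖(1 - α n) * s * (1 - α n)‖ := by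
      have hsa : star ((1:A) - α n) = (1:A) - α n := by
        rw [star_sub, star_one, (IsSelfAdjoint.of_nonneg (hα0 n)).star_eq]
      have hx_eq : ((1 - α n) * u m) * star ((1 - α n) * u m)
          = (1 - α n) * (u m * star (u m)) * (1 - α n) := by
        rw [star_mul, hsa]
        noncomm_ring
      have hconj : (1 - α n) * (u m * star (u m)) * (1 - α n)
          ≤ M • ((1 - α n) * s * (1 - α n)) := by
        have := star_left_conjugate_le_conjugate hdm ((1:A) - α n)
        rw [hsa] at this
        refine this.trans_eq ?_
        rw [mul_smul_comm M ((1:A) - α n) s, smul_mul_assoc]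
      have hpos : 0 ≤ ((1 - α n) * u m) * star ((1 - α n) * u m) :=
        mul_star_self_nonneg _
      calc ‖(1 - α n) * u m‖^2 = ‖((1 - α n) * u m) * star ((1 - α n) * u m)‖ := by
            rw [CStarRing.norm_self_mul_star, pow_two]
        _ ≤ ‖M • ((1 - α n) * s * (1 - α n))‖ := by
            refine CStarAlgebra.norm_le_norm_of_nonneg_of_le hpos ?_
            rw [hx_eq]
            exact hconj
        _ = M * ‖(1 - α n) * s * (1 - α n)‖ := by
            rw [norm_smul, Real.norm_of_nonneg hM.le]
    have hfinal : ‖(1 - α n) * u m‖^2 < ε^2 := by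
      calc ‖(1 - α n) * u m‖^2 ≤ M * ‖(1 - α n) * s * (1 - α n)‖ := hxsq
        _ ≤ M * (δ + ε^2/(4*M')) := by
            exact mul_le_mul_of_nonneg_left hcfc_bound hM.le
        _ ≤ M' * (ε^2/(4*M') + ε^2/(4*M')) := by
            refine mul_le_mul (by linarith) (by linarith) ?_ hM'.le
            positivity
        _ < ε^2 := by
            rw [← add_div]
            rw [mul_comm, div_mul_eq_mul_div]
            rw [div_lt_iff₀ (by positivity)]
            nlinarith
    rw [Real.dist_eq, sub_zero, abs_of_nonneg (norm_nonneg _)]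
    nlinarith [norm_nonneg ((1 - α n) * u m), sq_nonneg (‖(1 - α n) * u m‖ - ε)]
  · -- quasicentral part
    intro g
    obtain ⟨C, hC1, hC2, hC3⟩ := hinv g
    have hC0 : (0:ℝ) < C := lt_of_lt_of_le one_pos hC1
    set K : ℕ → ℝ := fun n => C ^ ((2⁻¹:ℝ)^n) with hK_def
    have hK1 : ∀ n, 1 ≤ K n := fun n => Real.one_le_rpow hC1 (by positivity)
    have hKpos : ∀ n, 0 < K n := fun n => lt_of_lt_of_le one_pos (hK1 n)
    have hKsqrt : ∀ n, Real.sqrt (K n) = K (n+1) := by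
      intro n
      show Real.sqrt (C ^ ((2⁻¹:ℝ)^n)) = C ^ ((2⁻¹:ℝ)^(n+1))
      rw [Real.sqrt_eq_rpow, ← Real.rpow_mul hC0.le, pow_succ]
      norm_num
    have hKey : ∀ n, ρ g (α n) ≤ K n • α n ∧ α n ≤ K n • ρ g (α n) := by
      intro n
      induction n with
      | zero =>
        have hK0 : K 0 = C := by
          show C ^ ((2⁻¹:ℝ)^0) = C
          rw [pow_zero, Real.rpow_one]
        constructor
        · rw [hα_zero, hK0]
          exact hC2
        · rw [hα_zero, hK0]
          exact hC3
      | succ n ih =>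
        obtain ⟨i1, i2⟩ := ih
        constructor
        · have := qa_sqrt_le_sqrt (qa_map_nonneg _ (hα0 n)) i1
          rw [qa_sqrt_smul (hKpos n).le (hα0 n), hKsqrt n,
            ← qa_map_sqrt _ (hα0 n)] at this
          exact this
        · have := qa_sqrt_le_sqrt (hα0 n) i2
          rw [qa_sqrt_smul (hKpos n).le (qa_map_nonneg _ (hα0 n)), hKsqrt n,
            ← qa_map_sqrt _ (hα0 n)] at this
          exact this
    have hbound : ∀ n, ‖α n - ρ g (α n)‖ ≤ 3 * (1 - (K n)⁻¹) := by
      intro n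
      obtain ⟨i1, i2⟩ := hKey n
      have hKn1 : (K n)⁻¹ ≤ 1 := inv_le_one_of_one_le₀ (hK1 n)
      have hρ1 : ρ g (α n) ≤ 1 := by
        have := qa_map_le (ρ g) (hα1 n)
        rwa [map_one] at this
      -- upper bound
      have hup : α n - ρ g (α n) ≤ (1 - (K n)⁻¹) • (1:A) := by
        have h1 : (K n)⁻¹ • α n ≤ ρ g (α n) := by
          have := qa_smul_le (r := (K n)⁻¹) (by positivity) i2
          rwa [smul_smul, inv_mul_cancel₀ (hKpos n).ne', one_smul] at this
        have h2 : α n - ρ g (α n) ≤ α n - (K n)⁻¹ • α n := by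
          exact sub_le_sub_left h1 _
        refine h2.trans ?_
        have h3 : α n - (K n)⁻¹ • α n = (1 - (K n)⁻¹) • α n := by
          rw [sub_smul, one_smul]
        rw [h3]
        exact qa_smul_le (by linarith) (hα1 n)
      -- lower bound
      have hlow : -((1 - (K n)⁻¹) • (1:A)) ≤ α n - ρ g (α n) := by
        rw [neg_le, neg_sub]
        have h1 : (K n)⁻¹ • ρ g (α n) ≤ α n := by
          have := qa_smul_le (r := (K n)⁻¹) (by positivity) i1
          rwa [smul_smul, inv_mul_cancel₀ (hKpos n).ne', one_smul] at this
        have h2 : ρ g (α n) - α n ≤ ρ g (α n) - (K n)⁻¹ • ρ g (α n) :=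
          sub_le_sub_left h1 _
        refine h2.trans ?_
        rw [show ρ g (α n) - (K n)⁻¹ • ρ g (α n) = (1 - (K n)⁻¹) • ρ g (α n) by
          rw [sub_smul, one_smul]]
        exact qa_smul_le (by linarith) hρ1
      exact qa_norm_le_of_sandwich (by linarith) hlow hup
    have hKlim : Tendsto (fun n => 3 * (1 - (K n)⁻¹)) atTop (𝓝 0) := by
      have h1 : Tendsto (fun n : ℕ => Real.log C * (2⁻¹:ℝ)^n) atTop (𝓝 0) := by
        simpa using (tendsto_pow_atTop_nhds_zero_of_lt_one (by norm_num)
          (by norm_num : (2⁻¹:ℝ) < 1)).const_mul (Real.log C)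
      have h2 := (Real.continuous_exp.tendsto 0).comp h1
      rw [Real.exp_zero] at h2
      have hKlim1 : Tendsto K atTop (𝓝 1) := by
        refine h2.congr fun n => ?_
        show Real.exp (Real.log C * (2⁻¹:ℝ)^n) = C ^ ((2⁻¹:ℝ)^n)
        rw [Real.rpow_def_of_pos hC0]
      have h3 : Tendsto (fun n => (K n)⁻¹) atTop (𝓝 1) := by
        simpa using hKlim1.inv₀ one_ne_zero
      have h4 : Tendsto (fun n => 3 * (1 - (K n)⁻¹)) atTop (𝓝 (3 * (1 - 1))) :=
        (tendsto_const_nhds.sub h3).const_mul 3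
      simpa using h4
    exact squeeze_zero (fun n => norm_nonneg _) hbound hKlim


end QAhelpers

/-- Let `A` be a unital C*-algebra with a closed two-sided ideal `I`, and let a countable
group `Γ` act on `A` by *-automorphisms preserving `I`.  For any countable subset
`I₀ ⊆ I` there is an increasing sequence `(α n)` in `I` with `0 ≤ α n ≤ 1` such that
`‖(1 − α n) a‖ → 0` for all `a ∈ I₀` and `‖α n − g·(α n)‖ → 0` for all `g ∈ Γ`. -/
theorem exists_quasicentral_approximate_unit
    (A : Type*) [CStarAlgebra A] [PartialOrder A] [StarOrderedRing A]
    (Γ : Type*) [Group Γ] [Countable Γ]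
    (ρ : Γ → (A ≃⋆ₐ[ℂ] A)) (hρ : ∀ g h a, ρ (g * h) a = ρ g (ρ h a))
    (I : TwoSidedIdeal A) (hIclosed : IsClosed (I : Set A))
    (hIinv : ∀ (g : Γ), ∀ a ∈ I, ρ g a ∈ I)
    (I₀ : Set A) (hI₀ : I₀.Countable) (hI₀I : I₀ ⊆ (I : Set A)) :
    ∃ α : ℕ → A,
      Monotone α ∧
      (∀ n, α n ∈ I) ∧
      (∀ n, 0 ≤ α n) ∧
      (∀ n, α n ≤ 1) ∧
      (∀ a ∈ I₀, Tendsto (fun n => ‖(1 - α n) * a‖) atTop (nhds 0)) ∧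
      (∀ g : Γ, Tendsto (fun n => ‖α n - ρ g (α n)‖) atTop (nhds 0)) := by
  classical
  obtain ⟨v, hv⟩ := exists_surjective_nat Γ
  obtain ⟨u, hu⟩ := (hI₀.insert 0).exists_eq_range (Set.insert_nonempty 0 I₀)
  have huI : ∀ m, u m ∈ I := by
    intro m
    have hmem : u m ∈ insert (0:A) I₀ := by rw [hu]; exact Set.mem_range_self m
    rcases Set.mem_insert_iff.mp hmem with h | h
    · rw [h]; exact I.zero_mem
    · exact hI₀I h
  obtain ⟨s, hsI, hs0, hs1, hinv, hdom⟩ := qa_exists_s ρ hρ I hIclosed hIinv v hv u huI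
  obtain ⟨α, h1, h2, h3, h4, h5, h6⟩ := qa_alpha ρ I hIclosed u s hsI hs0 hs1 hinv hdom
  refine ⟨α, h1, h2, h3, h4, ?_, h6⟩
  intro a ha
  have hmem : a ∈ insert (0:A) I₀ := Set.mem_insert_iff.mpr (Or.inr ha)
  rw [hu] at hmem
  obtain ⟨m, hm⟩ := hmem
  exact hm ▸ h5 m
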